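/- If (U_n)_{n∈ω} is a sequence of pairwise non-isomorphic weak P-point ultrafilters on ω, then every ultrafilter W in the closure of {U_n : n ∈ ω} in βω \ ω is dynamically discrete. -/

import Mathlib

def IsFreeUF (𝒰 : Ultrafilter ℕ) : Prop := ∀ A : Set ℕ, A.Finite → A ∉ 𝒰

def IsWeakPPoint (𝒰 : Ultrafilter ℕ) : Prop :=
  ∀ 𝒱 : ℕ → Ultrafilter ℕ, (∀ n, IsFreeUF (𝒱 n)) → (∀ n, 𝒱 n ≠ 𝒰) →
    ∃ U ∈ 𝒰, ∀ n, U ∉ 𝒱 n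

/-- Ultrafilters `𝒰, 𝒱` are isomorphic if some bijection of `ω` maps one
onto the other. -/
def IsomorphicUF (𝒰 𝒱 : Ultrafilter ℕ) : Prop :=
  ∃ f : Equiv.Perm ℕ, Ultrafilter.map (⇑f) 𝒱 = 𝒰

def orbitUF (G : Subgroup (Equiv.Perm ℕ)) (𝒰 : Ultrafilter ℕ) :
    Set (Ultrafilter ℕ) :=
  {q | ∃ g ∈ G, q = Ultrafilter.map (⇑g) 𝒰}

def IsDynamicallyDiscrete (𝒰 : Ultrafilter ℕ) : Prop :=
  ∀ G : Subgroup (Equiv.Perm ℕ), Countable G →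
    DiscreteTopology (orbitUF G 𝒰)

open Filter Set

lemma exists_free_ne (W : Ultrafilter ℕ) : ∃ P : Ultrafilter ℕ, IsFreeUF P ∧ P ≠ W := by
  classical
  set g : ℕ → ℕ := if (Set.range fun n => 2*n) ∈ W then (fun n => 2*n+1) else (fun n => 2*n)
    with hg
  have hginj : Function.Injective g := by
    rw [hg]; split <;> intro a b hab <;> simp only [] at hab <;> omega
  have hrange : Set.range g ∉ W := by
    rw [hg]; split
    · rename_i hEv
      intro hOdd
      have hsub : Set.range (fun n => 2*n+1) ⊆ (Set.range fun n => 2*n)ᶜ := by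
        rintro x ⟨a, rfl⟩ ⟨b, hb⟩; simp only [] at hb; omega
      exact (Ultrafilter.compl_mem_iff_notMem.mp
        (Filter.mem_of_superset hOdd hsub)) hEv
    · assumption
  refine ⟨Ultrafilter.map g (Filter.hyperfilter ℕ), ?_, ?_⟩
  · intro A hA hmem
    rw [Ultrafilter.mem_map] at hmem
    exact (Set.Finite.preimage hginj.injOn hA).notMem_hyperfilter hmem
  · intro hEq
    apply hrange
    rw [← hEq, Ultrafilter.mem_map]
    simp only [Set.preimage_range]
    exact Filter.univ_mem

lemma free_map (u : Ultrafilter ℕ) (f : Equiv.Perm ℕ) (hu : IsFreeUF u) :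
    IsFreeUF (Ultrafilter.map (⇑f) u) := by
  intro A hA hmem
  rw [Ultrafilter.mem_map] at hmem
  exact hu _ (hA.preimage (f.injective.injOn)) hmem

lemma map_map_inv (v : Ultrafilter ℕ) (f : Equiv.Perm ℕ) :
    Ultrafilter.map (⇑f) (Ultrafilter.map (⇑f⁻¹) v) = v := by
  rw [Ultrafilter.map_map, Equiv.Perm.inv_def, Equiv.self_comp_symm, Ultrafilter.map_id]

lemma wp_map (u : Ultrafilter ℕ) (f : Equiv.Perm ℕ)
    (hu : IsWeakPPoint u) : IsWeakPPoint (Ultrafilter.map (⇑f) u) := by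
  intro 𝒱 hfr hne
  obtain ⟨U, hU, havoid⟩ := hu (fun j => Ultrafilter.map (⇑f⁻¹) (𝒱 j))
    (fun j => free_map _ _ (hfr j))
    (fun j hEq => hne j (by rw [← hEq, map_map_inv]))
  refine ⟨⇑f '' U, ?_, ?_⟩
  · rw [Ultrafilter.mem_map, Equiv.preimage_image]; exact hU
  · intro j hmem
    apply havoid j
    rw [Ultrafilter.mem_map, Equiv.Perm.inv_def, ← Equiv.image_eq_preimage_symm]
    exact hmem

theorem closure_of_nonisomorphic_weakPPoints_dynamicallyDiscrete
    (𝒰 : ℕ → Ultrafilter ℕ)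
    (hfree : ∀ n, IsFreeUF (𝒰 n))
    (hwp : ∀ n, IsWeakPPoint (𝒰 n))
    (hnoniso : ∀ m n, m ≠ n → ¬ IsomorphicUF (𝒰 m) (𝒰 n))
    (𝒲 : Ultrafilter ℕ) (hfreeW : IsFreeUF 𝒲)
    (hW : 𝒲 ∈ closure (Set.range 𝒰)) :
    IsDynamicallyDiscrete 𝒲 := by
  classical
  intro G hG
  -- enumerate G
  obtain ⟨s, hs⟩ := exists_surjective_nat ↥G
  set h : ℕ → Equiv.Perm ℕ := fun k => ((s k : ↥G) : Equiv.Perm ℕ) with hh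
  have hsurj : ∀ g ∈ G, ∃ k, h k = g := by
    intro g hg
    obtain ⟨k, hk⟩ := hs ⟨g, hg⟩
    exact ⟨k, congrArg Subtype.val hk⟩
  set Q : ℕ → ℕ → Ultrafilter ℕ := fun k n => Ultrafilter.map (⇑(h k)) (𝒰 n) with hQ
  set M : ℕ → Set ℕ := fun k => {n | Q k n ≠ 𝒰 n} with hM
  obtain ⟨k₀, hk₀⟩ := hsurj 1 (one_mem G)
  have hQk₀ : ∀ m, Q k₀ m = 𝒰 m := by
    intro m
    rw [hQ]; simp only [hk₀, Equiv.Perm.coe_one, Ultrafilter.map_id]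
  have hQne : ∀ k n m, n ∈ M k → Q k n ≠ 𝒰 m := by
    intro k n m hn hEq
    rcases eq_or_ne m n with rfl | hmn
    · exact hn hEq
    · exact hnoniso m n hmn ⟨h k, hEq⟩
  -- closure fact
  set hat : Set ℕ → Set ℕ := fun A => {n | A ∈ 𝒰 n} with hhat
  have hclo : ∀ A ∈ 𝒲, ∃ n, A ∈ 𝒰 n := by
    intro A hA
    obtain ⟨u, huA, n, rfl⟩ :=
      mem_closure_iff.mp hW {u : Ultrafilter ℕ | A ∈ u} (ultrafilter_isOpen_basic A) hA
    exact ⟨n, huA⟩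
  -- the trace filter and ultrafilter
  set F : Filter ℕ :=
    { sets := {S | ∃ A ∈ 𝒲, hat A ⊆ S}
      univ_sets := ⟨Set.univ, Filter.univ_mem, Set.subset_univ _⟩
      sets_of_superset := by
        rintro S T ⟨A, hA, hsub⟩ hST
        exact ⟨A, hA, hsub.trans hST⟩
      inter_sets := by
        rintro S T ⟨A, hA, hAs⟩ ⟨B, hB, hBs⟩
        refine ⟨A ∩ B, Filter.inter_mem hA hB, fun n hn => ?_⟩
        have hA' : A ∈ 𝒰 n := Filter.mem_of_superset hn Set.inter_subset_left
        have hB' : B ∈ 𝒰 n := Filter.mem_of_superset hn Set.inter_subset_right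
        exact ⟨hAs hA', hBs hB'⟩ } with hF
  have hmemF : ∀ S : Set ℕ, S ∈ F ↔ ∃ A ∈ 𝒲, hat A ⊆ S := fun S => Iff.rfl
  have hFne : F.NeBot := by
    rw [Filter.neBot_iff]
    intro hbot
    have h0 : (∅ : Set ℕ) ∈ F := by rw [hbot]; exact Filter.mem_bot
    obtain ⟨A, hA, hsub⟩ := (hmemF ∅).mp h0
    obtain ⟨n, hn⟩ := hclo A hA
    exact hsub hn
  set 𝒱 : Ultrafilter ℕ := @Ultrafilter.of ℕ F hFne with hVdef
  have hV1 : ∀ A ∈ 𝒲, hat A ∈ 𝒱 := by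
    intro A hA
    exact (@Ultrafilter.of_le ℕ F hFne) ((hmemF (hat A)).mpr ⟨A, hA, subset_rfl⟩)
  have hV2 : ∀ A : Set ℕ, A ∈ 𝒲 ↔ hat A ∈ 𝒱 := by
    intro A
    refine ⟨hV1 A, fun hmem => ?_⟩
    by_contra hA
    have hAc : Aᶜ ∈ 𝒲 := Ultrafilter.compl_mem_iff_notMem.mpr hA
    have h2 : hat Aᶜ ∈ 𝒱 := hV1 _ hAc
    have hdisj : hat A ∩ hat Aᶜ = (∅ : Set ℕ) := by
      ext n
      simp only [Set.mem_inter_iff, Set.mem_empty_iff_false, iff_false, not_and]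
      intro h1 h2'
      exact (Ultrafilter.compl_mem_iff_notMem.mp h2') h1
    have : (∅ : Set ℕ) ∈ 𝒱 := hdisj ▸ Filter.inter_mem hmem h2
    exact Filter.empty_notMem (𝒱 : Filter ℕ) this
  -- M k is 𝒱-large when h k moves 𝒲
  have hMmem : ∀ k, Ultrafilter.map (⇑(h k)) 𝒲 ≠ 𝒲 → M k ∈ 𝒱 := by
    intro k hne
    by_contra hMk
    have hN : (M k)ᶜ ∈ 𝒱 := Ultrafilter.compl_mem_iff_notMem.mpr hMk
    apply hne
    apply Ultrafilter.coe_injective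
    apply Filter.ext
    intro A
    have hAiff : A ∈ Ultrafilter.map (⇑(h k)) 𝒲 ↔ hat ((⇑(h k)) ⁻¹' A) ∈ 𝒱 := by
      rw [Ultrafilter.mem_map]; exact hV2 _
    have hkey : hat ((⇑(h k)) ⁻¹' A) ∩ (M k)ᶜ = hat A ∩ (M k)ᶜ := by
      ext n
      simp only [Set.mem_inter_iff, Set.mem_compl_iff, hhat, Set.mem_setOf_eq, hM,
        not_not]
      constructor
      · rintro ⟨h1, h2⟩
        refine ⟨?_, h2⟩
        rw [← h2, hQ]
        rw [Ultrafilter.mem_map]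
        exact h1
      · rintro ⟨h1, h2⟩
        refine ⟨?_, h2⟩
        rw [← Ultrafilter.mem_map (m := ⇑(h k)) (f := 𝒰 n)]
        rw [show Ultrafilter.map (⇑(h k)) (𝒰 n) = Q k n from rfl, h2]
        exact h1
    have hinter : ∀ S : Set ℕ, S ∈ 𝒱 ↔ S ∩ (M k)ᶜ ∈ 𝒱 := by
      intro S
      exact ⟨fun hS => Filter.inter_mem hS hN,
        fun hS => Filter.mem_of_superset hS Set.inter_subset_left⟩
    show A ∈ Ultrafilter.map (⇑(h k)) 𝒲 ↔ A ∈ 𝒲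
    rw [hAiff, hV2 A, hinter (hat ((⇑(h k)) ⁻¹' A)), hkey, ← hinter (hat A)]
  -- pads
  choose pad hpadfree hpadne using exists_free_ne
  -- the sets B m
  have hBex : ∀ m, ∃ B ∈ 𝒰 m, ∀ k n, Q k n ≠ 𝒰 m → B ∉ Q k n := by
    intro m
    obtain ⟨B, hBm, hBav⟩ := hwp m
      (fun j => if Q j.unpair.1 j.unpair.2 = 𝒰 m then pad (𝒰 m) else Q j.unpair.1 j.unpair.2)
      (by
        intro j; split
        · exact hpadfree _
        · exact free_map _ _ (hfree _))
      (by
        intro j; split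
        · exact hpadne _
        · assumption)
    refine ⟨B, hBm, fun k n hne => ?_⟩
    have := hBav (Nat.pair k n)
    simp only [Nat.unpair_pair] at this
    rwa [if_neg hne] at this
  choose B hBmem hBav using hBex
  -- the sets D k n
  have hDex : ∀ k n, ∃ D ∈ Q k n, ∀ k' n', Q k' n' ≠ Q k n → D ∉ Q k' n' := by
    intro k n
    obtain ⟨D, hDm, hDav⟩ := wp_map (𝒰 n) (h k) (hwp n)
      (fun j => if Q j.unpair.1 j.unpair.2 = Q k n then pad (Q k n) else Q j.unpair.1 j.unpair.2)
      (by
        intro j; split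
        · exact hpadfree _
        · exact free_map _ _ (hfree _))
      (by
        intro j; split
        · exact hpadne _
        · assumption)
    refine ⟨D, hDm, fun k' n' hne => ?_⟩
    have := hDav (Nat.pair k' n')
    simp only [Nat.unpair_pair] at this
    rwa [if_neg hne] at this
  choose D hDmem hDav using hDex
  have hDnotU : ∀ k n m, n ∈ M k → D k n ∉ 𝒰 m := by
    intro k n m hn
    have h1 : Q k₀ m ≠ Q k n := by
      rw [hQk₀]
      exact fun hEq => (hQne k n m hn) hEq.symm
    have := hDav k n k₀ m h1
    rwa [hQk₀] at this
  -- the sets E m and the separating set A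
  set E : ℕ → Set ℕ := fun m =>
    B m \ ⋃ k ∈ Set.Iic m, ⋃ n ∈ Set.Iic m, (if n ∈ M k then D k n else ∅) with hE
  have hEmem : ∀ m, E m ∈ 𝒰 m := by
    intro m
    have hun : (⋃ k ∈ Set.Iic m, ⋃ n ∈ Set.Iic m, (if n ∈ M k then D k n else ∅)) ∉ 𝒰 m := by
      intro hmem
      rw [Ultrafilter.finite_biUnion_mem_iff (Set.finite_Iic m)] at hmem
      obtain ⟨k, _, hmem⟩ := hmem
      rw [Ultrafilter.finite_biUnion_mem_iff (Set.finite_Iic m)] at hmem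
      obtain ⟨n, _, hmem⟩ := hmem
      split at hmem
      · exact hDnotU k n m ‹_› hmem
      · exact Filter.empty_notMem ((𝒰 m : Filter ℕ)) hmem
    rw [hE]
    simp only [Set.diff_eq]
    exact Filter.inter_mem (hBmem m) (Ultrafilter.compl_mem_iff_notMem.mpr hun)
  set A : Set ℕ := ⋃ m, E m with hA
  have hAU : ∀ m, A ∈ 𝒰 m := fun m =>
    Filter.mem_of_superset (hEmem m) (Set.subset_iUnion E m)
  have hA𝒲 : A ∈ 𝒲 := by
    rw [hV2]
    have : hat A = Set.univ := Set.eq_univ_of_forall hAU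
    rw [this]
    exact Filter.univ_mem
  -- A avoids every moved copy of 𝒲
  have hAavoid : ∀ k, Ultrafilter.map (⇑(h k)) 𝒲 ≠ 𝒲 → A ∉ Ultrafilter.map (⇑(h k)) 𝒲 := by
    intro k hne hmem
    have hMk := hMmem k hne
    have key : ∀ n ∈ M k, A ∉ Q k n := by
      intro n hn hAQ
      have hZ : A ∩ D k n ⊆ ⋃ i ∈ Set.Iic (max k n), B i := by
        rintro x ⟨hxA, hxD⟩
        obtain ⟨m, hm⟩ := Set.mem_iUnion.mp hxA
        have hmle : m ≤ max k n := by
          by_contra hgt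
          push_neg at hgt
          have hk' : k ≤ m := le_of_lt (lt_of_le_of_lt (le_max_left k n) hgt)
          have hn' : n ≤ m := le_of_lt (lt_of_le_of_lt (le_max_right k n) hgt)
          apply hm.2
          refine Set.mem_biUnion hk' (Set.mem_biUnion hn' ?_)
          rw [if_pos hn]
          exact hxD
        exact Set.mem_biUnion hmle hm.1
      have h1 : A ∩ D k n ∈ Q k n := Filter.inter_mem hAQ (hDmem k n)
      have h2 : (⋃ i ∈ Set.Iic (max k n), B i) ∈ Q k n := Filter.mem_of_superset h1 hZ
      rw [Ultrafilter.finite_biUnion_mem_iff (Set.finite_Iic _)] at h2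
      obtain ⟨i, _, hBQ⟩ := h2
      exact hBav i k n (hQne k n i hn) hBQ
    rw [Ultrafilter.mem_map] at hmem
    have hv : hat ((⇑(h k)) ⁻¹' A) ∈ 𝒱 := hV1 _ hmem
    have hsub : hat ((⇑(h k)) ⁻¹' A) ⊆ (M k)ᶜ := by
      intro n hn hnM
      apply key n hnM
      rw [hQ]
      rw [Ultrafilter.mem_map]
      exact hn
    have : (M k)ᶜ ∈ 𝒱 := Filter.mem_of_superset hv hsub
    exact (Ultrafilter.compl_mem_iff_notMem.mp this) hMk
  -- conclude discreteness
  apply discreteTopology_iff_isOpen_singleton.mpr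
  intro x
  obtain ⟨g, hgG, hgx⟩ := x.2
  rw [isOpen_induced_iff]
  refine ⟨{u : Ultrafilter ℕ | ⇑g '' A ∈ u}, ultrafilter_isOpen_basic _, ?_⟩
  ext y
  obtain ⟨g', hg'G, hg'y⟩ := y.2
  simp only [Set.mem_preimage, Set.mem_setOf_eq, Set.mem_singleton_iff]
  constructor
  · intro hmem
    apply Subtype.ext
    rw [hg'y, hgx]
    by_contra hne
    obtain ⟨k, hk⟩ := hsurj (g⁻¹ * g') (mul_mem (inv_mem hgG) hg'G)
    have hne2 : Ultrafilter.map (⇑(h k)) 𝒲 ≠ 𝒲 := by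
      intro hEq
      apply hne
      have h1 : g * (h k) = g' := by rw [hk]; group
      calc Ultrafilter.map (⇑g') 𝒲 = Ultrafilter.map (⇑(g * h k)) 𝒲 := by rw [h1]
        _ = Ultrafilter.map (⇑g ∘ ⇑(h k)) 𝒲 := by rw [Equiv.Perm.coe_mul]
        _ = Ultrafilter.map (⇑g) (Ultrafilter.map (⇑(h k)) 𝒲) :=
            (Ultrafilter.map_map 𝒲 (⇑(h k)) (⇑g)).symm
        _ = Ultrafilter.map (⇑g) 𝒲 := by rw [hEq]
    apply hAavoid k hne2
    rw [Ultrafilter.mem_map]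
    have hmem' : ⇑g' ⁻¹' (⇑g '' A) ∈ 𝒲 := by
      rw [hg'y, Ultrafilter.mem_map] at hmem
      exact hmem
    have hcomp : ⇑(h k) = ⇑g⁻¹ ∘ ⇑g' := by rw [hk, Equiv.Perm.coe_mul]
    rw [hcomp, Set.preimage_comp]
    rw [show (⇑g⁻¹) ⁻¹' A = ⇑g '' A from by
      rw [Equiv.Perm.inv_def, ← Equiv.image_eq_preimage_symm]]
    exact hmem'
  · intro hyx
    rw [hyx]
    show ⇑g '' A ∈ (x : Ultrafilter ℕ)
    rw [hgx, Ultrafilter.mem_map, Equiv.preimage_image]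
    exact hA𝒲
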